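/- There exists a constant C > 0 such that for every real r ≥ 0 and all φ ∈ H³(T) ∩ H^{r+1}(T) with zero spatial mean, the quadratic term Q[φ] := -3[H; φ_x']φ''_x - [H; φ']φ'''_x, with φ' := H[φ], satisfies ‖Q[φ]‖_{H^r(T)} ≤ C ‖φ_x‖_{H²(T)} ‖φ_x‖_{H^r(T)}; note C is independent of r. -/

import Mathlib

open scoped Real

noncomputable section

/-- The Japanese-bracket power `⟨k⟩ˢ = (1 + |k|²)^{s/2}`. -/
def japow (k : ℤ) (s : ℝ) : ℝ := (1 + (k : ℝ) ^ 2) ^ (s / 2)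

/-- The squared `Hˢ(𝕋)` norm of a periodic function described by its sequence of
Fourier coefficients `c`: `‖f‖²_{Hˢ} = 2π·Σ_k ⟨k⟩^{2s}|f^(k)|²`. -/
def hsNormSq (s : ℝ) (c : ℤ → ℂ) : ℝ := 2 * Real.pi * ∑' k : ℤ, japow k (2 * s) * ‖c k‖ ^ 2

/-- The `Hˢ(𝕋)` norm in terms of Fourier coefficients. -/
def hsNorm (s : ℝ) (c : ℤ → ℂ) : ℝ := Real.sqrt (hsNormSq s c)

/-- Membership in the Sobolev space `Hˢ(𝕋)`, in terms of Fourier coefficients. -/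
def MemHs (s : ℝ) (c : ℤ → ℂ) : Prop := Summable fun k : ℤ => japow k (2 * s) * ‖c k‖ ^ 2

/-- The discrete Hilbert transform on the Fourier side: `(H[f])^(k) = -i·sgn(k)·f^(k)`. -/
def hilbC (c : ℤ → ℂ) : ℤ → ℂ := fun k => -Complex.I * (Int.sign k : ℤ) * c k

/-- The `x`-derivative on the Fourier side: `(∂ₓf)^(k) = i·k·f^(k)`. -/
def derC (c : ℤ → ℂ) : ℤ → ℂ := fun k => Complex.I * (k : ℂ) * c k

/-- The pointwise product of two periodic functions on the Fourier side
(discrete convolution of the coefficients). -/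
def convC (a b : ℤ → ℂ) : ℤ → ℂ := fun k => ∑' ℓ : ℤ, a (k - ℓ) * b ℓ

/-- The commutator `[H; v]f = H[v·f] - v·H[f]` on the Fourier side. -/
def commH (v f : ℤ → ℂ) : ℤ → ℂ := fun k => hilbC (convC v f) k - convC v (hilbC f) k

/-- The quadratic term `Q[φ] = -3[H; φ'ₓ]φ'ₓₓ - [H; φ']φ'ₓₓₓ` (with `φ' = H[φ]`) of the
amplitude equation, on the Fourier side. -/
def quadQ (c : ℤ → ℂ) : ℤ → ℂ :=
  fun k =>
    -3 * commH (derC (hilbC c)) (derC (derC (hilbC c))) k -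
      commH (hilbC c) (derC (derC (derC (hilbC c)))) k

lemma base_pos (k : ℤ) : (0:ℝ) < 1 + (k : ℝ) ^ 2 := by positivity

lemma one_le_base (k : ℤ) : (1:ℝ) ≤ 1 + (k : ℝ) ^ 2 := by nlinarith [sq_nonneg (k:ℝ)]

lemma japow_pos (k : ℤ) (s : ℝ) : 0 < japow k s := Real.rpow_pos_of_pos (base_pos k) _

lemma japow_nonneg (k : ℤ) (s : ℝ) : 0 ≤ japow k s := (japow_pos k s).le

lemma one_le_japow (k : ℤ) {s : ℝ} (hs : 0 ≤ s) : 1 ≤ japow k s :=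
  Real.one_le_rpow (one_le_base k) (by positivity)

lemma japow_add (k : ℤ) (s t : ℝ) : japow k (s + t) = japow k s * japow k t := by
  unfold japow
  rw [← Real.rpow_add (base_pos k)]
  ring_nf

lemma japow_sq (k : ℤ) (s : ℝ) : japow k s ^ 2 = japow k (2 * s) := by
  unfold japow
  rw [← Real.rpow_natCast ((1 + (k:ℝ)^2) ^ (s/2)) 2, ← Real.rpow_mul (base_pos k).le]
  norm_num

lemma japow_two (k : ℤ) : japow k 2 = 1 + (k:ℝ)^2 := by
  unfold japow; norm_num

lemma japow_mono_exp (k : ℤ) {s t : ℝ} (h : s ≤ t) : japow k s ≤ japow k t :=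
  Real.rpow_le_rpow_of_exponent_le (one_le_base k) (by linarith)

lemma japow_mono_base {k m : ℤ} {s : ℝ} (hs : 0 ≤ s) (h : |k| ≤ |m|) :
    japow k s ≤ japow m s := by
  unfold japow
  apply Real.rpow_le_rpow (base_pos k).le _ (by positivity)
  have : (k:ℝ)^2 ≤ (m:ℝ)^2 := by
    have h' : |(k:ℝ)| ≤ |(m:ℝ)| := by exact_mod_cast h
    calc (k:ℝ)^2 = |(k:ℝ)|^2 := (sq_abs _).symm
    _ ≤ |(m:ℝ)|^2 := by exact pow_le_pow_left₀ (abs_nonneg _) h' 2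
    _ = (m:ℝ)^2 := sq_abs _
  linarith

lemma abs_le_japow_one (k : ℤ) : |(k:ℝ)| ≤ japow k 1 := by
  unfold japow
  rw [show ((1:ℝ)/2) = (1/2 : ℝ) by norm_num, ← Real.sqrt_eq_rpow]
  rw [← Real.sqrt_sq_eq_abs]
  exact Real.sqrt_le_sqrt (by nlinarith)

lemma abs_le_japow (k : ℤ) {s : ℝ} (hs : 1 ≤ s) : |(k:ℝ)| ≤ japow k s :=
  (abs_le_japow_one k).trans (japow_mono_exp k hs)

lemma sq_le_japow (k : ℤ) {s : ℝ} (hs : 2 ≤ s) : (k:ℝ)^2 ≤ japow k s := by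
  calc (k:ℝ)^2 ≤ 1 + (k:ℝ)^2 := by linarith
  _ = japow k 2 := (japow_two k).symm
  _ ≤ japow k s := japow_mono_exp k hs

lemma cube_le_japow (k : ℤ) : |(k:ℝ)|^3 ≤ japow k 3 := by
  have h1 : |(k:ℝ)|^3 = |(k:ℝ)| * (k:ℝ)^2 := by rw [← sq_abs]; ring
  rw [h1, show (3:ℝ) = 1 + 2 by norm_num, japow_add]
  exact mul_le_mul (abs_le_japow_one k) (sq_le_japow k le_rfl) (sq_nonneg _) (japow_nonneg _ _)


def lamZ (k l : ℤ) : ℤ :=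
  (Int.sign k - Int.sign l) * (-3 * |k - l| * (l * |l|) - Int.sign (k - l) * (l ^ 2 * |l|))

lemma sign_abs_le (x : ℤ) : |Int.sign x| ≤ 1 := by
  rcases lt_trichotomy x 0 with h | h | h
  · simp [Int.sign_eq_neg_one_iff_neg.2 h]
  · simp [h]
  · simp [Int.sign_eq_one_iff_pos.2 h]

lemma abs_lamZ_le (k l : ℤ) : |lamZ k l| ≤ 2 * (3 * |k - l| * l ^ 2 + |l| ^ 3) := by
  unfold lamZ
  rw [abs_mul]
  have h1 : |Int.sign k - Int.sign l| ≤ 2 := by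
    calc |Int.sign k - Int.sign l| ≤ |Int.sign k| + |Int.sign l| := abs_sub _ _
      _ ≤ 2 := by have := sign_abs_le k; have := sign_abs_le l; omega
  have b1 : |(-3 : ℤ) * |k - l| * (l * |l|)| = 3 * |k - l| * l ^ 2 := by
    have e0 : (-3 : ℤ) * |k - l| * (l * |l|) = -(3 * |k - l| * (l * |l|)) := by ring
    rw [e0, abs_neg, abs_mul, abs_mul, abs_mul, abs_abs, abs_abs, abs_mul_abs_self,
      show |(3:ℤ)| = 3 from rfl]
    ring
  have b2 : |Int.sign (k - l) * (l ^ 2 * |l|)| ≤ |l| ^ 3 := by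
    rw [abs_mul, abs_of_nonneg (show (0:ℤ) ≤ l ^ 2 * |l| by positivity)]
    rw [show l ^ 2 * |l| = |l| ^ 3 by rw [← sq_abs]; ring]
    have := sign_abs_le (k - l)
    nlinarith [pow_nonneg (abs_nonneg l) 3]
  have h2 : |(-3 * |k - l| * (l * |l|) - Int.sign (k - l) * (l ^ 2 * |l|))| ≤
      3 * |k - l| * l ^ 2 + |l| ^ 3 := by
    calc |(-3 * |k - l| * (l * |l|) - Int.sign (k - l) * (l ^ 2 * |l|))|
        ≤ |(-3 * |k - l| * (l * |l|))| + |Int.sign (k - l) * (l ^ 2 * |l|)| := abs_sub _ _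
      _ ≤ 3 * |k - l| * l ^ 2 + |l| ^ 3 := by rw [b1]; linarith
  exact mul_le_mul h1 h2 (abs_nonneg _) (by norm_num)

lemma lamZ_support {k l : ℤ} (h : lamZ k l ≠ 0) : |k| ≤ |k - l| ∧ |l| ≤ |k - l| := by
  have hs : Int.sign k ≠ Int.sign l := fun e => h (by simp [lamZ, e])
  have hl : l ≠ 0 := fun e => h (by simp [lamZ, e])
  rcases lt_trichotomy l 0 with hl' | hl' | hl'
  · have hk : 0 ≤ k := by
      by_contra hk
      push_neg at hk
      exact hs (by rw [Int.sign_eq_neg_one_iff_neg.2 hk, Int.sign_eq_neg_one_iff_neg.2 hl'])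
    constructor
    · rw [abs_of_nonneg hk, abs_of_nonneg (by omega)]; omega
    · rw [abs_of_neg hl', abs_of_nonneg (by omega)]; omega
  · exact absurd hl' hl
  · have hk : k ≤ 0 := by
      by_contra hk
      push_neg at hk
      exact hs (by rw [Int.sign_eq_one_iff_pos.2 hk, Int.sign_eq_one_iff_pos.2 hl'])
    constructor
    · rw [abs_of_nonpos hk, abs_of_nonpos (by omega)]; omega
    · rw [abs_of_pos hl', abs_of_nonpos (by omega)]; omega

lemma abs_lamZ_le' {k l : ℤ} (h : lamZ k l ≠ 0) : |lamZ k l| ≤ 8 * |k - l| * l ^ 2 := by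
  obtain ⟨-, h2⟩ := lamZ_support h
  have h3 := abs_lamZ_le k l
  have h4 : |l| ^ 3 ≤ |k - l| * l ^ 2 := by
    have e : |l| ^ 3 = |l| * l ^ 2 := by rw [← sq_abs]; ring
    rw [e]
    exact mul_le_mul_of_nonneg_right h2 (sq_nonneg l)
  linarith

lemma mul_sign_eq_abs (m : ℤ) : m * Int.sign m = |m| := by
  rcases lt_trichotomy m 0 with h | h | h
  · rw [Int.sign_eq_neg_one_iff_neg.2 h, abs_of_neg h]; ring
  · simp [h]
  · rw [Int.sign_eq_one_iff_pos.2 h, abs_of_pos h]; ring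

lemma derC_hilbC (c : ℤ → ℂ) (m : ℤ) : derC (hilbC c) m = ((|m| : ℤ) : ℂ) * c m := by
  unfold derC hilbC
  rw [← mul_sign_eq_abs m]
  push_cast
  linear_combination (-(m : ℂ) * ((Int.sign m : ℤ) : ℂ) * c m) * Complex.I_sq

lemma derC2_hilbC (c : ℤ → ℂ) (l : ℤ) :
    derC (derC (hilbC c)) l = Complex.I * ((l * |l| : ℤ) : ℂ) * c l := by
  have h : derC (derC (hilbC c)) l = Complex.I * (l : ℂ) * (derC (hilbC c) l) := rfl
  rw [h, derC_hilbC]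
  push_cast
  ring

lemma derC3_hilbC (c : ℤ → ℂ) (l : ℤ) :
    derC (derC (derC (hilbC c))) l = -((l ^ 2 * |l| : ℤ) : ℂ) * c l := by
  have h : derC (derC (derC (hilbC c))) l = Complex.I * (l : ℂ) * (derC (derC (hilbC c)) l) := rfl
  rw [h, derC2_hilbC]
  push_cast
  linear_combination ((l : ℂ) ^ 2 * ((|l| : ℤ) : ℂ) * c l) * Complex.I_sq

lemma norm_v1 (c : ℤ → ℂ) (m : ℤ) : ‖derC (hilbC c) m‖ = |(m : ℝ)| * ‖c m‖ := by
  rw [derC_hilbC, norm_mul, Complex.norm_intCast]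
  push_cast
  rw [abs_abs]

lemma norm_f1 (c : ℤ → ℂ) (l : ℤ) : ‖derC (derC (hilbC c)) l‖ = (l : ℝ) ^ 2 * ‖c l‖ := by
  rw [derC2_hilbC, norm_mul, norm_mul, Complex.norm_I, one_mul, Complex.norm_intCast]
  push_cast
  rw [abs_mul, abs_abs, abs_mul_abs_self, sq]

lemma norm_v2 (c : ℤ → ℂ) (m : ℤ) : ‖hilbC c m‖ ≤ ‖c m‖ := by
  unfold hilbC
  rw [norm_mul, norm_mul, norm_neg, Complex.norm_I, one_mul]
  have h2 : ‖((Int.sign m : ℤ) : ℂ)‖ ≤ 1 := by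
    rw [Complex.norm_intCast]
    exact_mod_cast sign_abs_le m
  exact mul_le_of_le_one_left (norm_nonneg _) h2

lemma norm_f2 (c : ℤ → ℂ) (l : ℤ) :
    ‖derC (derC (derC (hilbC c))) l‖ = |(l : ℝ)| ^ 3 * ‖c l‖ := by
  rw [derC3_hilbC, norm_mul, norm_neg, Complex.norm_intCast]
  push_cast
  rw [abs_mul, abs_pow, abs_abs]
  ring

lemma commH_eq (v f : ℤ → ℂ) (k : ℤ)
    (hn : Summable fun l : ℤ => ‖v (k - l)‖ * ‖f l‖) :
    commH v f k = ∑' l : ℤ,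
      -Complex.I * (((Int.sign k : ℤ) : ℂ) - ((Int.sign l : ℤ) : ℂ)) * (v (k - l) * f l) := by
  have h1 : Summable fun l : ℤ => v (k - l) * f l :=
    Summable.of_norm_bounded hn fun l => norm_mul_le _ _
  have h2 : Summable fun l : ℤ =>
      v (k - l) * (-Complex.I * ((Int.sign l : ℤ) : ℂ) * f l) := by
    apply Summable.of_norm_bounded hn
    intro l
    calc ‖v (k - l) * (-Complex.I * ((Int.sign l : ℤ) : ℂ) * f l)‖
        ≤ ‖v (k - l)‖ * ‖(-Complex.I * ((Int.sign l : ℤ) : ℂ) * f l)‖ := norm_mul_le _ _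
      _ ≤ ‖v (k - l)‖ * ‖f l‖ := by
          apply mul_le_mul_of_nonneg_left _ (norm_nonneg _)
          rw [norm_mul, norm_mul, norm_neg, Complex.norm_I, one_mul]
          have h2' : ‖((Int.sign l : ℤ) : ℂ)‖ ≤ 1 := by
            rw [Complex.norm_intCast]; exact_mod_cast sign_abs_le l
          exact mul_le_of_le_one_left (norm_nonneg _) h2'
  have e1 : hilbC (convC v f) k =
      ∑' l : ℤ, -Complex.I * ((Int.sign k : ℤ) : ℂ) * (v (k - l) * f l) := by
    show -Complex.I * ((Int.sign k : ℤ) : ℂ) * (∑' l : ℤ, v (k - l) * f l) = _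
    rw [← tsum_mul_left]
  have e2 : convC v (hilbC f) k =
      ∑' l : ℤ, v (k - l) * (-Complex.I * ((Int.sign l : ℤ) : ℂ) * f l) := rfl
  show hilbC (convC v f) k - convC v (hilbC f) k = _
  rw [e1, e2, ← Summable.tsum_sub (h1.mul_left _) h2]
  exact tsum_congr fun l => by ring

lemma summable_japow_shift {c : ℤ → ℂ} (hc : Summable fun m : ℤ => japow m 6 * ‖c m‖ ^ 2)
    (k : ℤ) :
    Summable fun l : ℤ => japow (k - l) 3 * ‖c (k - l)‖ * (japow l 3 * ‖c l‖) := by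
  have hsh : Summable fun l : ℤ => japow (k - l) 6 * ‖c (k - l)‖ ^ 2 := by
    have h := (Equiv.subLeft k).summable_iff.mpr hc
    exact h
  apply Summable.of_nonneg_of_le
    (fun l => mul_nonneg (mul_nonneg (japow_nonneg _ _) (norm_nonneg _))
      (mul_nonneg (japow_nonneg _ _) (norm_nonneg _))) (fun l => ?_)
    (((hsh.add hc).mul_left (1 / 2 : ℝ)))
  have h1 : japow (k - l) 3 * ‖c (k - l)‖ * (japow l 3 * ‖c l‖) ≤
      1 / 2 * ((japow (k - l) 3 * ‖c (k - l)‖) ^ 2 + (japow l 3 * ‖c l‖) ^ 2) := by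
    nlinarith [sq_nonneg (japow (k - l) 3 * ‖c (k - l)‖ - japow l 3 * ‖c l‖)]
  calc japow (k - l) 3 * ‖c (k - l)‖ * (japow l 3 * ‖c l‖)
      ≤ 1 / 2 * ((japow (k - l) 3 * ‖c (k - l)‖) ^ 2 + (japow l 3 * ‖c l‖) ^ 2) := h1
    _ = 1 / 2 * (japow (k - l) 6 * ‖c (k - l)‖ ^ 2 + japow l 6 * ‖c l‖ ^ 2) := by
        rw [mul_pow, mul_pow, japow_sq, japow_sq]
        norm_num

lemma quadQ_eq {c : ℤ → ℂ} (hc : Summable fun m : ℤ => japow m 6 * ‖c m‖ ^ 2) (k : ℤ) :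
    quadQ c k = ∑' l : ℤ, ((lamZ k l : ℤ) : ℂ) * (c (k - l) * c l) := by
  have hM := summable_japow_shift hc k
  have hb1 : ∀ l : ℤ, ‖derC (hilbC c) (k - l)‖ * ‖derC (derC (hilbC c)) l‖ ≤
      japow (k - l) 3 * ‖c (k - l)‖ * (japow l 3 * ‖c l‖) := by
    intro l
    rw [norm_v1, norm_f1]
    have e1 : |((k - l : ℤ) : ℝ)| ≤ japow (k - l) 3 := abs_le_japow _ (by norm_num)
    have e2 : ((l : ℝ)) ^ 2 ≤ japow l 3 := sq_le_japow _ (by norm_num)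
    exact mul_le_mul (mul_le_mul_of_nonneg_right e1 (norm_nonneg _))
      (mul_le_mul_of_nonneg_right e2 (norm_nonneg _))
      (mul_nonneg (sq_nonneg _) (norm_nonneg _))
      (mul_nonneg (japow_nonneg _ _) (norm_nonneg _))
  have hb2 : ∀ l : ℤ, ‖hilbC c (k - l)‖ * ‖derC (derC (derC (hilbC c))) l‖ ≤
      japow (k - l) 3 * ‖c (k - l)‖ * (japow l 3 * ‖c l‖) := by
    intro l
    rw [norm_f2]
    have e1 : ‖hilbC c (k - l)‖ ≤ japow (k - l) 3 * ‖c (k - l)‖ := by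
      calc ‖hilbC c (k - l)‖ ≤ ‖c (k - l)‖ := norm_v2 c (k - l)
        _ ≤ japow (k - l) 3 * ‖c (k - l)‖ := by
            nlinarith [one_le_japow (k - l) (show (0:ℝ) ≤ 3 by norm_num), norm_nonneg (c (k - l))]
    have e2 : |(l : ℝ)| ^ 3 ≤ japow l 3 := cube_le_japow l
    exact mul_le_mul e1 (mul_le_mul_of_nonneg_right e2 (norm_nonneg _))
      (mul_nonneg (pow_nonneg (abs_nonneg _) 3) (norm_nonneg _))
      (mul_nonneg (japow_nonneg _ _) (norm_nonneg _))
  have hn1 : Summable fun l : ℤ => ‖derC (hilbC c) (k - l)‖ * ‖derC (derC (hilbC c)) l‖ :=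
    Summable.of_nonneg_of_le (fun l => by positivity) hb1 hM
  have hn2 : Summable fun l : ℤ => ‖hilbC c (k - l)‖ * ‖derC (derC (derC (hilbC c))) l‖ :=
    Summable.of_nonneg_of_le (fun l => by positivity) hb2 hM
  have hs1 : Summable fun l : ℤ =>
      -Complex.I * (((Int.sign k : ℤ) : ℂ) - ((Int.sign l : ℤ) : ℂ)) *
        (derC (hilbC c) (k - l) * derC (derC (hilbC c)) l) := by
    apply Summable.of_norm_bounded (hn1.mul_left 2)
    intro l
    rw [norm_mul, norm_mul]
    have h2' : ‖(((Int.sign k : ℤ) : ℂ) - ((Int.sign l : ℤ) : ℂ))‖ ≤ 2 := by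
      calc ‖(((Int.sign k : ℤ) : ℂ) - ((Int.sign l : ℤ) : ℂ))‖
          ≤ ‖((Int.sign k : ℤ) : ℂ)‖ + ‖((Int.sign l : ℤ) : ℂ)‖ := norm_sub_le _ _
        _ ≤ 2 := by
            rw [Complex.norm_intCast, Complex.norm_intCast]
            have := sign_abs_le k; have := sign_abs_le l
            have a1 : |((Int.sign k : ℤ) : ℝ)| ≤ 1 := by exact_mod_cast sign_abs_le k
            have a2 : |((Int.sign l : ℤ) : ℝ)| ≤ 1 := by exact_mod_cast sign_abs_le l
            linarith
    rw [norm_neg, Complex.norm_I, one_mul]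
    calc ‖(((Int.sign k : ℤ) : ℂ) - ((Int.sign l : ℤ) : ℂ))‖ *
          ‖derC (hilbC c) (k - l) * derC (derC (hilbC c)) l‖
        ≤ 2 * ‖derC (hilbC c) (k - l) * derC (derC (hilbC c)) l‖ := by
          exact mul_le_mul_of_nonneg_right h2' (norm_nonneg _)
      _ ≤ 2 * (‖derC (hilbC c) (k - l)‖ * ‖derC (derC (hilbC c)) l‖) := by
          have := norm_mul_le (derC (hilbC c) (k - l)) (derC (derC (hilbC c)) l)
          linarith
  have hs2 : Summable fun l : ℤ =>
      -Complex.I * (((Int.sign k : ℤ) : ℂ) - ((Int.sign l : ℤ) : ℂ)) *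
        (hilbC c (k - l) * derC (derC (derC (hilbC c))) l) := by
    apply Summable.of_norm_bounded (hn2.mul_left 2)
    intro l
    rw [norm_mul, norm_mul]
    have h2' : ‖(((Int.sign k : ℤ) : ℂ) - ((Int.sign l : ℤ) : ℂ))‖ ≤ 2 := by
      calc ‖(((Int.sign k : ℤ) : ℂ) - ((Int.sign l : ℤ) : ℂ))‖
          ≤ ‖((Int.sign k : ℤ) : ℂ)‖ + ‖((Int.sign l : ℤ) : ℂ)‖ := norm_sub_le _ _
        _ ≤ 2 := by
            rw [Complex.norm_intCast, Complex.norm_intCast]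
            have a1 : |((Int.sign k : ℤ) : ℝ)| ≤ 1 := by exact_mod_cast sign_abs_le k
            have a2 : |((Int.sign l : ℤ) : ℝ)| ≤ 1 := by exact_mod_cast sign_abs_le l
            linarith
    rw [norm_neg, Complex.norm_I, one_mul]
    calc ‖(((Int.sign k : ℤ) : ℂ) - ((Int.sign l : ℤ) : ℂ))‖ *
          ‖hilbC c (k - l) * derC (derC (derC (hilbC c))) l‖
        ≤ 2 * ‖hilbC c (k - l) * derC (derC (derC (hilbC c))) l‖ :=
          mul_le_mul_of_nonneg_right h2' (norm_nonneg _)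
      _ ≤ 2 * (‖hilbC c (k - l)‖ * ‖derC (derC (derC (hilbC c))) l‖) := by
          have := norm_mul_le (hilbC c (k - l)) (derC (derC (derC (hilbC c))) l)
          linarith
  show -3 * commH (derC (hilbC c)) (derC (derC (hilbC c))) k -
      commH (hilbC c) (derC (derC (derC (hilbC c)))) k = _
  rw [commH_eq _ _ _ hn1, commH_eq _ _ _ hn2, ← tsum_mul_left,
    ← Summable.tsum_sub (hs1.mul_left (-3)) hs2]
  apply tsum_congr
  intro l
  rw [derC_hilbC, derC2_hilbC, derC3_hilbC,
    show hilbC c (k - l) = -Complex.I * ((Int.sign (k - l) : ℤ) : ℂ) * c (k - l) from rfl]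
  unfold lamZ
  push_cast
  linear_combination ((((Int.sign k : ℤ) : ℂ) - ((Int.sign l : ℤ) : ℂ)) *
    (3 * ((|k - l| : ℤ) : ℂ) * ((l : ℂ) * ((|l| : ℤ) : ℂ)) +
      ((Int.sign (k - l) : ℤ) : ℂ) * ((l : ℂ) ^ 2 * ((|l| : ℤ) : ℂ))) *
    (c (k - l) * c l)) * Complex.I_sq

lemma tsum_mul_le_sqrt {u v : ℤ → ℝ} (hu0 : ∀ i, 0 ≤ u i) (hv0 : ∀ i, 0 ≤ v i)
    (hu : Summable fun i => u i ^ 2) (hv : Summable fun i => v i ^ 2) :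
    ∑' i, u i * v i ≤ Real.sqrt (∑' i, u i ^ 2) * Real.sqrt (∑' i, v i ^ 2) := by
  apply tsum_le_of_sum_le' (mul_nonneg (Real.sqrt_nonneg _) (Real.sqrt_nonneg _))
  intro s
  have h1 : (∑ i ∈ s, u i * v i) ^ 2 ≤ (∑ i ∈ s, u i ^ 2) * ∑ i ∈ s, v i ^ 2 :=
    Finset.sum_mul_sq_le_sq_mul_sq s u v
  have h2 : ∑ i ∈ s, u i ^ 2 ≤ ∑' i, u i ^ 2 := Summable.sum_le_tsum s (fun i _ => sq_nonneg _) hu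
  have h3 : ∑ i ∈ s, v i ^ 2 ≤ ∑' i, v i ^ 2 := Summable.sum_le_tsum s (fun i _ => sq_nonneg _) hv
  have h4 : 0 ≤ ∑ i ∈ s, u i * v i :=
    Finset.sum_nonneg fun i _ => mul_nonneg (hu0 i) (hv0 i)
  have h5 : (∑ i ∈ s, u i * v i) ≤ Real.sqrt ((∑' i, u i ^ 2) * ∑' i, v i ^ 2) := by
    rw [← Real.sqrt_sq h4]
    apply Real.sqrt_le_sqrt
    calc (∑ i ∈ s, u i * v i) ^ 2 ≤ (∑ i ∈ s, u i ^ 2) * ∑ i ∈ s, v i ^ 2 := h1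
      _ ≤ (∑' i, u i ^ 2) * ∑' i, v i ^ 2 :=
        mul_le_mul h2 h3 (Finset.sum_nonneg fun i _ => sq_nonneg _)
          (tsum_nonneg fun i => sq_nonneg _)
  rwa [Real.sqrt_mul (tsum_nonneg fun i => sq_nonneg _)] at h5

lemma summable_mul_of_sq {u w : ℤ → ℝ} (hu : Summable fun i => u i ^ 2)
    (hw : Summable fun i => w i ^ 2) : Summable fun i => u i * w i := by
  apply Summable.of_norm_bounded ((hu.add hw).mul_left (1 / 2 : ℝ))
  intro i
  rw [Real.norm_eq_abs]
  rw [abs_le]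
  constructor
  · nlinarith [sq_nonneg (u i + w i)]
  · nlinarith [sq_nonneg (u i - w i)]

lemma summable_C1 : Summable fun l : ℤ => (l : ℝ) ^ 2 / (1 + (l : ℝ) ^ 2) ^ 2 := by
  apply Summable.of_nonneg_of_le (fun l => by positivity) (fun l => ?_)
    ((Real.summable_one_div_int_pow (p := 2)).mpr (by norm_num))
  rcases eq_or_ne l 0 with h | h
  · simp [h]
  · have hl : (1 : ℝ) ≤ (l : ℝ) ^ 2 := by
      have h1 : (1 : ℤ) ≤ l ^ 2 := by
        rcases lt_or_gt_of_ne h with h' | h' <;> nlinarith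
      exact_mod_cast h1
    rw [div_le_div_iff₀ (by positivity) (by positivity)]
    nlinarith [sq_nonneg (l : ℝ)]

lemma C1_pos : 0 < ∑' l : ℤ, (l : ℝ) ^ 2 / (1 + (l : ℝ) ^ 2) ^ 2 := by
  have h := Summable.le_tsum summable_C1 1 (fun i _ => by positivity)
  have : ((1 : ℤ) : ℝ) ^ 2 / (1 + ((1 : ℤ) : ℝ) ^ 2) ^ 2 = 1 / 4 := by norm_num
  rw [this] at h
  linarith

def AA (c : ℤ → ℂ) (r : ℝ) (m : ℤ) : ℝ := japow m r * |(m : ℝ)| * ‖c m‖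

def BB (c : ℤ → ℂ) (l : ℤ) : ℝ := (l : ℝ) ^ 2 * ‖c l‖

lemma AA_nonneg (c : ℤ → ℂ) (r : ℝ) (m : ℤ) : 0 ≤ AA c r m :=
  mul_nonneg (mul_nonneg (japow_nonneg _ _) (abs_nonneg _)) (norm_nonneg _)

lemma BB_nonneg (c : ℤ → ℂ) (l : ℤ) : 0 ≤ BB c l :=
  mul_nonneg (sq_nonneg _) (norm_nonneg _)

lemma norm_derC (c : ℤ → ℂ) (k : ℤ) : ‖derC c k‖ = |(k : ℝ)| * ‖c k‖ := by
  unfold derC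
  rw [norm_mul, norm_mul, Complex.norm_I, one_mul, Complex.norm_intCast]

lemma summable_AA_sq {c : ℤ → ℂ} {r : ℝ}
    (hcr2 : Summable fun m : ℤ => japow m (2 * r + 2) * ‖c m‖ ^ 2) :
    Summable fun m : ℤ => AA c r m ^ 2 := by
  apply Summable.of_nonneg_of_le (fun m => sq_nonneg _) (fun m => ?_) hcr2
  unfold AA
  rw [mul_pow, mul_pow, japow_sq, sq_abs, japow_add]
  have h1 : (m : ℝ) ^ 2 ≤ japow m 2 := sq_le_japow m le_rfl
  exact mul_le_mul_of_nonneg_right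
    (mul_le_mul_of_nonneg_left h1 (japow_nonneg _ _)) (sq_nonneg _)

lemma summable_BB_sq {c : ℤ → ℂ}
    (hc6 : Summable fun m : ℤ => japow m 6 * ‖c m‖ ^ 2) :
    Summable fun l : ℤ => BB c l ^ 2 := by
  apply Summable.of_nonneg_of_le (fun l => sq_nonneg _) (fun l => ?_) hc6
  unfold BB
  rw [mul_pow]
  have h1 : ((l : ℝ) ^ 2) ^ 2 ≤ japow l 6 := by
    have h2 : (l : ℝ) ^ 2 ≤ japow l 3 := sq_le_japow l (by norm_num)
    calc ((l : ℝ) ^ 2) ^ 2 ≤ japow l 3 ^ 2 :=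
          pow_le_pow_left₀ (sq_nonneg _) h2 2
      _ = japow l 6 := by rw [japow_sq]; norm_num
  exact mul_le_mul_of_nonneg_right h1 (sq_nonneg _)

lemma BB_eq_mul (c : ℤ → ℂ) (l : ℤ) :
    BB c l = AA c 2 l * (|(l : ℝ)| / japow l 2) := by
  unfold BB AA
  have h : japow l 2 ≠ 0 := (japow_pos l 2).ne'
  rw [eq_comm]
  calc japow l 2 * |(l : ℝ)| * ‖c l‖ * (|(l : ℝ)| / japow l 2)
      = (japow l 2 / japow l 2) * (|(l : ℝ)| * |(l : ℝ)| * ‖c l‖) := by ring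
    _ = (l : ℝ) ^ 2 * ‖c l‖ := by
        rw [div_self h, one_mul, abs_mul_abs_self, ← pow_two]

lemma w_sq (l : ℤ) : (|(l : ℝ)| / japow l 2) ^ 2 = (l : ℝ) ^ 2 / (1 + (l : ℝ) ^ 2) ^ 2 := by
  rw [div_pow, sq_abs, japow_two]

lemma summable_BB {c : ℤ → ℂ}
    (hc6 : Summable fun m : ℤ => japow m 6 * ‖c m‖ ^ 2) : Summable (BB c) := by
  have hA : Summable fun l : ℤ => AA c 2 l ^ 2 := by
    apply summable_AA_sq
    have e : (2 * (2:ℝ) + 2) = 6 := by norm_num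
    rw [e]; exact hc6
  have hw : Summable fun l : ℤ => (|(l : ℝ)| / japow l 2) ^ 2 := by
    apply Summable.congr summable_C1
    intro l; rw [w_sq]
  exact (summable_mul_of_sq hA hw).congr fun l => (BB_eq_mul c l).symm

lemma BB_tsum_le {c : ℤ → ℂ}
    (hc6 : Summable fun m : ℤ => japow m 6 * ‖c m‖ ^ 2) :
    ∑' l, BB c l ≤ Real.sqrt (∑' l : ℤ, (l : ℝ) ^ 2 / (1 + (l : ℝ) ^ 2) ^ 2) *
      Real.sqrt (∑' l, AA c 2 l ^ 2) := by
  have hA : Summable fun l : ℤ => AA c 2 l ^ 2 := by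
    apply summable_AA_sq
    have e : (2 * (2:ℝ) + 2) = 6 := by norm_num
    rw [e]; exact hc6
  have hw : Summable fun l : ℤ => (|(l : ℝ)| / japow l 2) ^ 2 := by
    apply Summable.congr summable_C1
    intro l; rw [w_sq]
  have h := tsum_mul_le_sqrt (u := fun l => AA c 2 l) (v := fun l => |(l : ℝ)| / japow l 2)
    (fun l => AA_nonneg c 2 l) (fun l => div_nonneg (abs_nonneg _) (japow_nonneg _ _)) hA hw
  calc ∑' l, BB c l = ∑' l, AA c 2 l * (|(l : ℝ)| / japow l 2) :=
        tsum_congr fun l => BB_eq_mul c l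
    _ ≤ Real.sqrt (∑' l : ℤ, AA c 2 l ^ 2) * Real.sqrt (∑' l : ℤ, (|(l : ℝ)| / japow l 2) ^ 2) := h
    _ = Real.sqrt (∑' l : ℤ, (l : ℝ) ^ 2 / (1 + (l : ℝ) ^ 2) ^ 2) *
        Real.sqrt (∑' l, AA c 2 l ^ 2) := by
        rw [mul_comm]
        congr 2
        exact tsum_congr fun l => w_sq l

lemma summable_AB {c : ℤ → ℂ} {r : ℝ}
    (hc6 : Summable fun m : ℤ => japow m 6 * ‖c m‖ ^ 2)
    (hcr2 : Summable fun m : ℤ => japow m (2 * r + 2) * ‖c m‖ ^ 2) (k : ℤ) :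
    Summable fun l : ℤ => AA c r (k - l) * BB c l := by
  apply summable_mul_of_sq
  · have h := (Equiv.subLeft k).summable_iff.mpr (summable_AA_sq hcr2)
    exact h
  · exact summable_BB_sq hc6

lemma key_pointwise {c : ℤ → ℂ} {r : ℝ} (hr : 0 ≤ r)
    (hc6 : Summable fun m : ℤ => japow m 6 * ‖c m‖ ^ 2)
    (hcr2 : Summable fun m : ℤ => japow m (2 * r + 2) * ‖c m‖ ^ 2) (k : ℤ) :
    japow k r * ‖quadQ c k‖ ≤ 8 * ∑' l, AA c r (k - l) * BB c l := by
  rw [quadQ_eq hc6 k]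
  have hM := summable_japow_shift hc6 k
  have hnorm_eq : ∀ l : ℤ, ‖((lamZ k l : ℤ) : ℂ) * (c (k - l) * c l)‖ =
      |((lamZ k l : ℤ) : ℝ)| * (‖c (k - l)‖ * ‖c l‖) := by
    intro l
    rw [norm_mul, norm_mul, Complex.norm_intCast]
  have hbound : ∀ l : ℤ, |((lamZ k l : ℤ) : ℝ)| * (‖c (k - l)‖ * ‖c l‖) ≤
      8 * (japow (k - l) 3 * ‖c (k - l)‖ * (japow l 3 * ‖c l‖)) := by
    intro l
    have h1 : |((lamZ k l : ℤ) : ℝ)| ≤ 8 * (japow (k - l) 3 * japow l 3) := by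
      have h3 : |((lamZ k l : ℤ) : ℝ)| ≤
          2 * (3 * |((k - l : ℤ) : ℝ)| * (l : ℝ) ^ 2 + |(l : ℝ)| ^ 3) := by
        exact_mod_cast abs_lamZ_le k l
      have e1 : |((k - l : ℤ) : ℝ)| ≤ japow (k - l) 3 := abs_le_japow _ (by norm_num)
      have e2 : (l : ℝ) ^ 2 ≤ japow l 3 := sq_le_japow _ (by norm_num)
      have e3 : |(l : ℝ)| ^ 3 ≤ japow l 3 := cube_le_japow l
      have e4 : (1 : ℝ) ≤ japow (k - l) 3 := one_le_japow _ (by norm_num)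
      have e5 : 3 * |((k - l : ℤ) : ℝ)| * (l : ℝ) ^ 2 ≤
          3 * (japow (k - l) 3 * japow l 3) := by
        have := mul_le_mul e1 e2 (sq_nonneg _) (japow_nonneg _ _)
        nlinarith [abs_nonneg ((k - l : ℤ) : ℝ), sq_nonneg (l : ℝ)]
      have e6 : |(l : ℝ)| ^ 3 ≤ japow (k - l) 3 * japow l 3 := by
        nlinarith [japow_nonneg l 3, pow_nonneg (abs_nonneg (l : ℝ)) 3]
      linarith
    calc |((lamZ k l : ℤ) : ℝ)| * (‖c (k - l)‖ * ‖c l‖)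
        ≤ 8 * (japow (k - l) 3 * japow l 3) * (‖c (k - l)‖ * ‖c l‖) :=
          mul_le_mul_of_nonneg_right h1 (mul_nonneg (norm_nonneg _) (norm_nonneg _))
      _ = 8 * (japow (k - l) 3 * ‖c (k - l)‖ * (japow l 3 * ‖c l‖)) := by ring
  have hsum_norm : Summable fun l : ℤ => ‖((lamZ k l : ℤ) : ℂ) * (c (k - l) * c l)‖ := by
    apply Summable.of_nonneg_of_le (fun l => norm_nonneg _) (fun l => ?_) (hM.mul_left 8)
    rw [hnorm_eq l]
    exact hbound l
  have hAB := summable_AB hc6 hcr2 k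
  have hterm : ∀ l : ℤ, japow k r * ‖((lamZ k l : ℤ) : ℂ) * (c (k - l) * c l)‖ ≤
      8 * (AA c r (k - l) * BB c l) := by
    intro l
    rw [hnorm_eq l]
    by_cases h0 : lamZ k l = 0
    · rw [h0]
      simp only [Int.cast_zero, abs_zero, zero_mul, mul_zero]
      exact mul_nonneg (by norm_num) (mul_nonneg (AA_nonneg c r _) (BB_nonneg c _))
    · obtain ⟨hk1, -⟩ := lamZ_support h0
      have e1 : japow k r ≤ japow (k - l) r := japow_mono_base hr hk1
      have e2 : |((lamZ k l : ℤ) : ℝ)| ≤ 8 * |((k - l : ℤ) : ℝ)| * (l : ℝ) ^ 2 := by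
        exact_mod_cast abs_lamZ_le' h0
      calc japow k r * (|((lamZ k l : ℤ) : ℝ)| * (‖c (k - l)‖ * ‖c l‖))
          ≤ japow (k - l) r * (8 * |((k - l : ℤ) : ℝ)| * (l : ℝ) ^ 2 *
              (‖c (k - l)‖ * ‖c l‖)) := by
            apply mul_le_mul e1
              (mul_le_mul_of_nonneg_right e2 (mul_nonneg (norm_nonneg _) (norm_nonneg _)))
              (mul_nonneg (abs_nonneg _) (mul_nonneg (norm_nonneg _) (norm_nonneg _)))
              (japow_nonneg _ _)
        _ = 8 * (AA c r (k - l) * BB c l) := by unfold AA BB; ring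
  calc japow k r * ‖∑' l : ℤ, ((lamZ k l : ℤ) : ℂ) * (c (k - l) * c l)‖
      ≤ japow k r * ∑' l : ℤ, ‖((lamZ k l : ℤ) : ℂ) * (c (k - l) * c l)‖ :=
        mul_le_mul_of_nonneg_left (norm_tsum_le_tsum_norm hsum_norm) (japow_nonneg _ _)
    _ = ∑' l : ℤ, japow k r * ‖((lamZ k l : ℤ) : ℂ) * (c (k - l) * c l)‖ :=
        tsum_mul_left.symm
    _ ≤ ∑' l : ℤ, 8 * (AA c r (k - l) * BB c l) :=
        Summable.tsum_le_tsum hterm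
          (Summable.of_nonneg_of_le
            (fun l => mul_nonneg (japow_nonneg _ _) (norm_nonneg _)) hterm
            (hAB.mul_left 8))
          (hAB.mul_left 8)
    _ = 8 * ∑' l : ℤ, AA c r (k - l) * BB c l := tsum_mul_left

def shear : ℤ × ℤ ≃ ℤ × ℤ :=
  ⟨fun p => (p.1 - p.2, p.2), fun p => (p.1 + p.2, p.2),
    fun p => by obtain ⟨x, y⟩ := p; simp, fun p => by obtain ⟨x, y⟩ := p; simp⟩


/-- There is a constant `C > 0` (independent of `r`) such that for every
real `r ≥ 0` and every `φ ∈ H³ ∩ H^(r+1)` with zero spatial mean,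
`‖Q[φ]‖_{H^r} ≤ C * ‖φₓ‖_{H²} * ‖φₓ‖_{H^r}`. -/
theorem stmt_15 :
    ∃ C > (0 : ℝ), ∀ (r : ℝ), 0 ≤ r → ∀ c : ℤ → ℂ,
      c 0 = 0 → MemHs 3 c → MemHs (r + 1) c →
      hsNorm r (quadQ c) ≤ C * hsNorm 2 (derC c) * hsNorm r (derC c) := by
  refine ⟨8 * Real.sqrt (∑' l : ℤ, (l : ℝ) ^ 2 / (1 + (l : ℝ) ^ 2) ^ 2) /
      Real.sqrt (2 * Real.pi),
    div_pos (mul_pos (by norm_num) (Real.sqrt_pos.2 C1_pos))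
      (Real.sqrt_pos.2 (by positivity)), ?_⟩
  intro r hr c _hc0 hc3 hcr
  have hc6 : Summable fun m : ℤ => japow m 6 * ‖c m‖ ^ 2 := by
    have h := hc3
    unfold MemHs at h
    norm_num at h
    exact h
  have hcr2 : Summable fun m : ℤ => japow m (2 * r + 2) * ‖c m‖ ^ 2 := by
    have h := hcr
    unfold MemHs at h
    simp only [show (2 * (r + 1) : ℝ) = 2 * r + 2 from by ring] at h
    exact h
  have hSA : Summable fun m : ℤ => AA c r m ^ 2 := summable_AA_sq hcr2
  have hSB : Summable (BB c) := summable_BB hc6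
  set SA := ∑' m : ℤ, AA c r m ^ 2 with hSAdef
  set SB := ∑' l : ℤ, BB c l with hSBdef
  have hSA0 : 0 ≤ SA := tsum_nonneg fun m => sq_nonneg _
  have hSB0 : 0 ≤ SB := tsum_nonneg fun l => BB_nonneg c l
  have hpair : Summable fun p : ℤ × ℤ => AA c r p.1 ^ 2 * BB c p.2 :=
    hSA.mul_of_nonneg hSB (fun m => sq_nonneg _) fun l => BB_nonneg c l
  have hg : Summable fun p : ℤ × ℤ => AA c r (p.1 - p.2) ^ 2 * BB c p.2 :=
    ((Equiv.summable_iff shear).mpr hpair).congr fun p => rfl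
  have hT : ∀ k : ℤ, Summable fun l : ℤ => AA c r (k - l) ^ 2 * BB c l :=
    fun k => hg.prod_factor k
  have hTs : Summable fun k : ℤ => ∑' l : ℤ, AA c r (k - l) ^ 2 * BB c l := hg.prod
  have htsumT : ∑' k : ℤ, ∑' l : ℤ, AA c r (k - l) ^ 2 * BB c l = SA * SB := by
    have hstep : ∑' p : ℤ × ℤ, AA c r (p.1 - p.2) ^ 2 * BB c p.2
        = ∑' k : ℤ, ∑' l : ℤ, AA c r (k - l) ^ 2 * BB c l := Summable.tsum_prod' hg hT
    have hinner : ∀ m : ℤ, Summable fun l : ℤ => AA c r m ^ 2 * BB c l :=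
      fun m => hSB.mul_left _
    have hstep2 : ∑' p : ℤ × ℤ, AA c r p.1 ^ 2 * BB c p.2
        = ∑' m : ℤ, ∑' l : ℤ, AA c r m ^ 2 * BB c l :=
      Summable.tsum_prod' hpair hinner
    have h1 : ∑' p : ℤ × ℤ, AA c r (p.1 - p.2) ^ 2 * BB c p.2
        = ∑' p : ℤ × ℤ, AA c r p.1 ^ 2 * BB c p.2 := by
      rw [← shear.tsum_eq (fun p : ℤ × ℤ => AA c r p.1 ^ 2 * BB c p.2)]
      exact tsum_congr fun p => rfl
    calc ∑' k : ℤ, ∑' l : ℤ, AA c r (k - l) ^ 2 * BB c l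
        = ∑' p : ℤ × ℤ, AA c r (p.1 - p.2) ^ 2 * BB c p.2 := hstep.symm
      _ = ∑' p : ℤ × ℤ, AA c r p.1 ^ 2 * BB c p.2 := h1
      _ = ∑' m : ℤ, ∑' l : ℤ, AA c r m ^ 2 * BB c l := hstep2
      _ = ∑' m : ℤ, AA c r m ^ 2 * SB := tsum_congr fun m => tsum_mul_left
      _ = SA * SB := tsum_mul_right
  have hCS : ∀ k : ℤ, (∑' l : ℤ, AA c r (k - l) * BB c l) ^ 2 ≤
      SB * ∑' l : ℤ, AA c r (k - l) ^ 2 * BB c l := by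
    intro k
    have hu : Summable fun l : ℤ => (AA c r (k - l) * Real.sqrt (BB c l)) ^ 2 :=
      (hT k).congr fun l => by rw [mul_pow, Real.sq_sqrt (BB_nonneg c l)]
    have hv : Summable fun l : ℤ => Real.sqrt (BB c l) ^ 2 :=
      hSB.congr fun l => (Real.sq_sqrt (BB_nonneg c l)).symm
    have h := tsum_mul_le_sqrt (u := fun l => AA c r (k - l) * Real.sqrt (BB c l))
      (v := fun l => Real.sqrt (BB c l))
      (fun l => mul_nonneg (AA_nonneg _ _ _) (Real.sqrt_nonneg _))
      (fun l => Real.sqrt_nonneg _) hu hv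
    have e1 : ∑' l : ℤ, (AA c r (k - l) * Real.sqrt (BB c l)) * Real.sqrt (BB c l)
        = ∑' l : ℤ, AA c r (k - l) * BB c l :=
      tsum_congr fun l => by rw [mul_assoc, Real.mul_self_sqrt (BB_nonneg c l)]
    have e2 : ∑' l : ℤ, (AA c r (k - l) * Real.sqrt (BB c l)) ^ 2
        = ∑' l : ℤ, AA c r (k - l) ^ 2 * BB c l :=
      tsum_congr fun l => by rw [mul_pow, Real.sq_sqrt (BB_nonneg c l)]
    have e3 : ∑' l : ℤ, Real.sqrt (BB c l) ^ 2 = SB :=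
      tsum_congr fun l => Real.sq_sqrt (BB_nonneg c l)
    rw [e1, e2, e3] at h
    have hS0 : 0 ≤ ∑' l : ℤ, AA c r (k - l) * BB c l :=
      tsum_nonneg fun l => mul_nonneg (AA_nonneg _ _ _) (BB_nonneg _ _)
    have hT0 : 0 ≤ ∑' l : ℤ, AA c r (k - l) ^ 2 * BB c l :=
      tsum_nonneg fun l => mul_nonneg (sq_nonneg _) (BB_nonneg _ _)
    calc (∑' l : ℤ, AA c r (k - l) * BB c l) ^ 2
        ≤ (Real.sqrt (∑' l : ℤ, AA c r (k - l) ^ 2 * BB c l) * Real.sqrt SB) ^ 2 :=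
          pow_le_pow_left₀ hS0 h 2
      _ = SB * ∑' l : ℤ, AA c r (k - l) ^ 2 * BB c l := by
          rw [mul_pow, Real.sq_sqrt hT0, Real.sq_sqrt hSB0]
          ring
  have hQk : ∀ k : ℤ, japow k (2 * r) * ‖quadQ c k‖ ^ 2 ≤
      64 * SB * ∑' l : ℤ, AA c r (k - l) ^ 2 * BB c l := by
    intro k
    have key := key_pointwise hr hc6 hcr2 k
    have h1 : japow k (2 * r) * ‖quadQ c k‖ ^ 2 = (japow k r * ‖quadQ c k‖) ^ 2 := by
      rw [mul_pow, japow_sq]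
    rw [h1]
    calc (japow k r * ‖quadQ c k‖) ^ 2
        ≤ (8 * ∑' l : ℤ, AA c r (k - l) * BB c l) ^ 2 :=
          pow_le_pow_left₀ (mul_nonneg (japow_nonneg _ _) (norm_nonneg _)) key 2
      _ = 64 * (∑' l : ℤ, AA c r (k - l) * BB c l) ^ 2 := by ring
      _ ≤ 64 * (SB * ∑' l : ℤ, AA c r (k - l) ^ 2 * BB c l) := by
          have := hCS k; linarith
      _ = 64 * SB * ∑' l : ℤ, AA c r (k - l) ^ 2 * BB c l := by ring
  have hQsum : Summable fun k : ℤ => japow k (2 * r) * ‖quadQ c k‖ ^ 2 :=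
    Summable.of_nonneg_of_le (fun k => mul_nonneg (japow_nonneg _ _) (sq_nonneg _)) hQk
      (hTs.mul_left (64 * SB))
  have htotal : ∑' k : ℤ, japow k (2 * r) * ‖quadQ c k‖ ^ 2 ≤ 64 * SB * (SA * SB) := by
    calc ∑' k : ℤ, japow k (2 * r) * ‖quadQ c k‖ ^ 2
        ≤ ∑' k : ℤ, 64 * SB * ∑' l : ℤ, AA c r (k - l) ^ 2 * BB c l :=
          Summable.tsum_le_tsum hQk hQsum (hTs.mul_left (64 * SB))
      _ = 64 * SB * ∑' k : ℤ, ∑' l : ℤ, AA c r (k - l) ^ 2 * BB c l := tsum_mul_left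
      _ = 64 * SB * (SA * SB) := by rw [htsumT]
  have hnr : hsNormSq r (derC c) = 2 * Real.pi * SA := by
    unfold hsNormSq
    rw [hSAdef]
    congr 1
    apply tsum_congr
    intro k
    rw [norm_derC, ← japow_sq]
    unfold AA
    ring
  have hn2 : hsNormSq 2 (derC c) = 2 * Real.pi * ∑' l : ℤ, AA c 2 l ^ 2 := by
    unfold hsNormSq
    congr 1
    apply tsum_congr
    intro k
    rw [norm_derC, ← japow_sq]
    unfold AA
    ring
  have hQnormsq : hsNormSq r (quadQ c) ≤ 2 * Real.pi * (64 * SB * (SA * SB)) := by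
    unfold hsNormSq
    exact mul_le_mul_of_nonneg_left htotal (by positivity)
  unfold hsNorm
  rw [hnr, hn2]
  have hD0 : 0 ≤ ∑' l : ℤ, AA c 2 l ^ 2 := tsum_nonneg fun l => sq_nonneg _
  have hSBle : SB ≤ Real.sqrt (∑' l : ℤ, (l : ℝ) ^ 2 / (1 + (l : ℝ) ^ 2) ^ 2) *
      Real.sqrt (∑' l : ℤ, AA c 2 l ^ 2) := BB_tsum_le hc6
  have h2pi0 : (0:ℝ) ≤ 2 * Real.pi := by positivity
  have hs2pi : Real.sqrt (2 * Real.pi) ≠ 0 := by positivity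
  calc Real.sqrt (hsNormSq r (quadQ c))
      ≤ Real.sqrt (2 * Real.pi * (64 * SB * (SA * SB))) := Real.sqrt_le_sqrt hQnormsq
    _ = 8 * SB * Real.sqrt (2 * Real.pi * SA) := by
        rw [show 2 * Real.pi * (64 * SB * (SA * SB)) = (8 * SB) ^ 2 * (2 * Real.pi * SA)
            from by ring,
          Real.sqrt_mul (sq_nonneg _), Real.sqrt_sq (by linarith : (0:ℝ) ≤ 8 * SB)]
    _ ≤ 8 * (Real.sqrt (∑' l : ℤ, (l : ℝ) ^ 2 / (1 + (l : ℝ) ^ 2) ^ 2) *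
          Real.sqrt (∑' l : ℤ, AA c 2 l ^ 2)) * Real.sqrt (2 * Real.pi * SA) := by
        apply mul_le_mul_of_nonneg_right _ (Real.sqrt_nonneg _)
        linarith
    _ = 8 * Real.sqrt (∑' l : ℤ, (l : ℝ) ^ 2 / (1 + (l : ℝ) ^ 2) ^ 2) /
          Real.sqrt (2 * Real.pi) *
          Real.sqrt (2 * Real.pi * (∑' l : ℤ, AA c 2 l ^ 2)) *
          Real.sqrt (2 * Real.pi * SA) := by
        rw [Real.sqrt_mul h2pi0 (∑' l : ℤ, AA c 2 l ^ 2)]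
        field_simp
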